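/- Suppose the powers of two tests admit expansions π_{n,A}(c) = a_0(c) + a_1(c) n^{-1/2} + o(n^{-1/2}) and π_{n,B}(c) = b_0(c) + b_1(c) n^{-1/2} + o(n^{-1/2}), with a_0 = b_0 continuously differentiable with a_0'(c) > 0, and k_n is a sequence with π_{n,A}(c) = π_{k_n,B}(c (k_n/n)^{1/2}) and k_n/n → 1. Then the deficiency d_n = k_n − n satisfies d_n / n^{1/2} → 2(a_1(c) − b_1(c))/(c · a_0'(c)). -/

import Mathlib

open Filter Asymptotics Real

/-- Deficiency (Hodges–Lehmann): if the powers of tests `A` and `B` admit the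
expansions `π_{n,A}(c) = a₀(c) + a₁(c) n^{-1/2} + o(n^{-1/2})` and
`π_{n,B}(c) = b₀(c) + b₁(c) n^{-1/2} + o(n^{-1/2})` with `a₀ = b₀`
differentiable at `c` with positive derivative, and `k_n` matches the powers,
`π_{n,A}(c) = π_{k_n,B}(c (k_n/n)^{1/2})`, with `k_n/n → 1`, then the
deficiency `d_n = k_n − n` satisfies
`d_n / n^{1/2} → 2 (a₁(c) − b₁(c)) / (c a₀'(c))`. -/
theorem deficiency_limit
    (a0 a1 b0 b1 : ℝ → ℝ) (c : ℝ) (hc : 0 < c)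
    (hab : a0 = b0)
    (a0' : ℝ) (hderiv : HasDerivAt a0 a0' c) (ha0' : 0 < a0')
    (ha1cont : ContinuousAt a1 c) (hb1cont : ContinuousAt b1 c)
    (πA πB : ℕ → ℝ → ℝ)
    (hA : (fun n : ℕ => πA n c - a0 c - a1 c / Real.sqrt n)
      =o[atTop] fun n : ℕ => 1 / Real.sqrt n)
    (k : ℕ → ℕ) (hkpos : ∀ n, 0 < k n)
    (hkn : Tendsto (fun n : ℕ => (k n : ℝ) / n) atTop (nhds 1))
    (hB : (fun n : ℕ => πB (k n) (c * Real.sqrt ((k n : ℝ) / n))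
        - b0 (c * Real.sqrt ((k n : ℝ) / n))
        - b1 (c * Real.sqrt ((k n : ℝ) / n)) / Real.sqrt (k n))
      =o[atTop] fun n : ℕ => 1 / Real.sqrt n)
    (hmatch : ∀ n : ℕ, πA n c = πB (k n) (c * Real.sqrt ((k n : ℝ) / n))) :
    Tendsto (fun n : ℕ => ((k n : ℝ) - n) / Real.sqrt n) atTop
      (nhds (2 * (a1 c - b1 c) / (c * a0'))) := by
  subst hab
  set u : ℕ → ℝ := fun n => Real.sqrt ((k n : ℝ) / n) with hu_def
  set t : ℕ → ℝ := fun n => c * u n with ht_def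
  set L : ℝ := a1 c - b1 c with hL_def
  -- basic limits
  have hu : Tendsto u atTop (nhds 1) := by
    have := (Real.continuous_sqrt.continuousAt (x := (1:ℝ))).tendsto.comp hkn
    rw [Real.sqrt_one] at this
    exact this
  have ht : Tendsto t atTop (nhds c) := by
    have h := hu.const_mul c
    rw [mul_one] at h
    exact h
  -- eventual positivity facts
  have hev : ∀ᶠ n : ℕ in atTop, 1 ≤ n := eventually_ge_atTop 1
  -- √n * eA → 0
  have hAe : Tendsto (fun n : ℕ =>
      Real.sqrt n * (πA n c - a0 c - a1 c / Real.sqrt n)) atTop (nhds 0) := by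
    have := hA.tendsto_div_nhds_zero
    refine this.congr (fun n => ?_)
    rw [div_div_eq_mul_div, div_one]; ring
  have hBe : Tendsto (fun n : ℕ =>
      Real.sqrt n * (πB (k n) (t n) - a0 (t n) - b1 (t n) / Real.sqrt (k n)))
      atTop (nhds 0) := by
    have := hB.tendsto_div_nhds_zero
    refine this.congr (fun n => ?_)
    rw [div_div_eq_mul_div, div_one]; ring
  have hb1 : Tendsto (fun n => b1 (t n)) atTop (nhds (b1 c)) := hb1cont.tendsto.comp ht
  have huinv : Tendsto (fun n => 1 / u n) atTop (nhds 1) := by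
    have := hu.inv₀ one_ne_zero
    simpa [one_div] using this
  -- key identity
  have key : ∀ᶠ n : ℕ in atTop, Real.sqrt n * (a0 (t n) - a0 c) =
      Real.sqrt n * (πA n c - a0 c - a1 c / Real.sqrt n)
      - Real.sqrt n * (πB (k n) (t n) - a0 (t n) - b1 (t n) / Real.sqrt (k n))
      + a1 c - b1 (t n) * (1 / u n) := by
    filter_upwards [hev] with n hn
    have hn0 : (0:ℝ) < n := by exact_mod_cast hn
    have hsn : (0:ℝ) < Real.sqrt n := Real.sqrt_pos.2 hn0
    have hk0 : (0:ℝ) < k n := by exact_mod_cast hkpos n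
    have hsk : (0:ℝ) < Real.sqrt (k n) := Real.sqrt_pos.2 hk0
    have hudiv : u n = Real.sqrt (k n) / Real.sqrt n := by
      simp only [hu_def]
      exact Real.sqrt_div (by positivity) _
    have hm := hmatch n
    have h1 : Real.sqrt n * (a1 c / Real.sqrt n) = a1 c := by
      field_simp
    have h2 : Real.sqrt n * (b1 (t n) / Real.sqrt (k n)) = b1 (t n) * (1 / u n) := by
      rw [hudiv, one_div_div]
      ring
    have : a0 (t n) - a0 c = (πA n c - a0 c - a1 c / Real.sqrt n)
        - (πB (k n) (t n) - a0 (t n) - b1 (t n) / Real.sqrt (k n))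
        + a1 c / Real.sqrt n - b1 (t n) / Real.sqrt (k n) := by
      rw [hm]; ring
    rw [this]; linear_combination h1 - h2
  -- F := √n (a0 (t n) - a0 c) → L
  have hF : Tendsto (fun n : ℕ => Real.sqrt n * (a0 (t n) - a0 c)) atTop (nhds L) := by
    have hrhs : Tendsto (fun n : ℕ =>
        Real.sqrt n * (πA n c - a0 c - a1 c / Real.sqrt n)
        - Real.sqrt n * (πB (k n) (t n) - a0 (t n) - b1 (t n) / Real.sqrt (k n))
        + a1 c - b1 (t n) * (1 / u n)) atTop (nhds (0 - 0 + a1 c - b1 c * 1)) :=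
      ((hAe.sub hBe).add_const (a1 c)).sub (hb1.mul huinv)
    have : (0:ℝ) - 0 + a1 c - b1 c * 1 = L := by simp [hL_def]
    rw [this] at hrhs
    exact hrhs.congr' (key.mono fun n h => h.symm)
  -- derivative little-o
  have hg : (fun n : ℕ => a0 (t n) - a0 c - (t n - c) * a0') =o[atTop]
      fun n : ℕ => t n - c := by
    have h := hasDerivAt_iff_isLittleO.mp hderiv
    have := h.comp_tendsto ht
    simpa [smul_eq_mul, mul_comm, Function.comp_def] using this
  -- G bound: ∀ ε>0 eventually |G n| ≤ ε |x n|
  have hGb : ∀ ε : ℝ, 0 < ε → ∀ᶠ n : ℕ in atTop,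
      |Real.sqrt n * (a0 (t n) - a0 c - (t n - c) * a0')| ≤
        ε * |Real.sqrt n * (t n - c)| := by
    intro ε hε
    filter_upwards [hg.def hε] with n h
    have hsn : (0:ℝ) ≤ Real.sqrt n := Real.sqrt_nonneg n
    rw [abs_mul, abs_mul, abs_of_nonneg hsn]
    rw [Real.norm_eq_abs, Real.norm_eq_abs] at h
    calc Real.sqrt n * |a0 (t n) - a0 c - (t n - c) * a0'|
        ≤ Real.sqrt n * (ε * |t n - c|) := by
          exact mul_le_mul_of_nonneg_left h hsn
      _ = ε * (Real.sqrt n * |t n - c|) := by ring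
  -- F bounded
  set C : ℝ := |L| + 1 with hC_def
  have hCpos : 0 < C := by positivity
  have hFb : ∀ᶠ n : ℕ in atTop, |Real.sqrt n * (a0 (t n) - a0 c)| ≤ C := by
    have h := hF.abs
    have : ∀ᶠ n : ℕ in atTop, |Real.sqrt n * (a0 (t n) - a0 c)| < C :=
      h.eventually_lt_const (by simp [hC_def])
    exact this.mono fun n h => h.le
  -- x bounded
  have hxb : ∀ᶠ n : ℕ in atTop, |Real.sqrt n * (t n - c)| ≤ 2 * C / a0' := by
    filter_upwards [hGb (a0'/2) (by positivity), hFb] with n hG hFn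
    have hid : a0' * (Real.sqrt n * (t n - c)) =
        Real.sqrt n * (a0 (t n) - a0 c)
        - Real.sqrt n * (a0 (t n) - a0 c - (t n - c) * a0') := by ring
    have : a0' * |Real.sqrt n * (t n - c)| ≤ C + (a0'/2) * |Real.sqrt n * (t n - c)| := by
      calc a0' * |Real.sqrt n * (t n - c)| = |a0' * (Real.sqrt n * (t n - c))| := by
            rw [abs_mul a0' (Real.sqrt ↑n * (t n - c)), abs_of_pos ha0']
        _ ≤ |Real.sqrt n * (a0 (t n) - a0 c)| +
            |Real.sqrt n * (a0 (t n) - a0 c - (t n - c) * a0')| := by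
            rw [hid]; exact abs_sub _ _
        _ ≤ C + (a0'/2) * |Real.sqrt n * (t n - c)| := add_le_add hFn hG
    rw [le_div_iff₀ ha0']
    nlinarith [this]
  -- G → 0
  have hG0 : Tendsto (fun n : ℕ =>
      Real.sqrt n * (a0 (t n) - a0 c - (t n - c) * a0')) atTop (nhds 0) := by
    rw [Metric.tendsto_atTop]
    intro ε hε
    set δ : ℝ := ε * a0' / (4 * C) with hδ_def
    have hδ : 0 < δ := by positivity
    have h := ((hGb δ hδ).and hxb).exists_forall_of_atTop
    obtain ⟨N, hN⟩ := h
    refine ⟨N, fun n hn => ?_⟩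
    obtain ⟨h1, h2⟩ := hN n hn
    rw [Real.dist_eq, sub_zero]
    calc |Real.sqrt n * (a0 (t n) - a0 c - (t n - c) * a0')|
        ≤ δ * |Real.sqrt n * (t n - c)| := h1
      _ ≤ δ * (2 * C / a0') := by
          exact mul_le_mul_of_nonneg_left h2 hδ.le
      _ = ε / 2 := by
          rw [hδ_def]; field_simp; ring
      _ < ε := by linarith
  -- x → L / a0'
  have hx : Tendsto (fun n : ℕ => Real.sqrt n * (t n - c)) atTop (nhds (L / a0')) := by
    have h := (hF.sub hG0).div_const a0'
    rw [sub_zero] at h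
    refine h.congr (fun n => ?_)
    field_simp
    ring
  -- final
  have heq : ∀ᶠ n : ℕ in atTop, ((k n : ℝ) - n) / Real.sqrt n =
      Real.sqrt n * (t n - c) * (u n + 1) / c := by
    filter_upwards [hev] with n hn
    have hn0 : (0:ℝ) < n := by exact_mod_cast hn
    have hsn : (0:ℝ) < Real.sqrt n := Real.sqrt_pos.2 hn0
    have hsq : Real.sqrt n * Real.sqrt n = n := Real.mul_self_sqrt hn0.le
    have husq : u n * u n = (k n : ℝ) / n := Real.mul_self_sqrt (by positivity)
    have h1 : Real.sqrt n * (t n - c) * (u n + 1) / c =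
        Real.sqrt n * (u n * u n - 1) := by
      simp only [ht_def]
      field_simp
      ring
    rw [h1, husq]
    field_simp
    nlinarith [hsq]
  have hlim : Tendsto (fun n : ℕ => Real.sqrt n * (t n - c) * (u n + 1) / c)
      atTop (nhds (L / a0' * (1 + 1) / c)) :=
    (hx.mul (hu.add_const 1)).div_const c
  have hval : L / a0' * (1 + 1) / c = 2 * (a1 c - b1 c) / (c * a0') := by
    rw [hL_def]; field_simp; ring
  rw [hval] at hlim
  exact hlim.congr' (heq.mono fun n h => h.symm)
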